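/- For Algorithm-1 iterates with a saddle point (φ*, q*, μ*) of L, p* = Bφ*, b* = q*, and step size 0 < ρ < (2rs² + s)/(1 + rs)², one has ‖Bφⁿ − pⁿ‖ → 0, ‖bⁿ − qⁿ‖ → 0, ‖μⁿ − νⁿ‖ → 0, ‖μⁿ − ηⁿ‖ → 0, ‖νⁿ − νⁿ⁻¹‖ → 0, ‖ηⁿ − ηⁿ⁻¹‖ → 0, ‖pⁿ⁺¹ − pⁿ‖ → 0, ‖qⁿ⁺¹ − qⁿ‖ → 0, and I(μⁿ) − I(μ*) − ⟨μⁿ − μ*, p* − b*⟩ → 0 as n → ∞. -/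

import Mathlib

open RealInnerProductSpace Filter Topology

lemma key_scalar (ρ r s u : ℝ) (hρ : 0 < ρ) (hsu : s * u = 1)
    (nd ne nP nQ nm nX nY md me mP mQ mX mY dP eQ : ℝ)
    (hA1 : md + mP + (r + u) * (nd + dP) ≤ 0)
    (hA2 : me - mQ + (r + u) * (ne - eQ) ≤ 0)
    (hA3 : s * (2 * nm - mX - mY) - mP + mQ ≤ 0) :
    (nP + 2 * (ρ * (r + u)) * dP + (ρ * (r + u)) ^ 2 * nd)
      + (nQ - 2 * (ρ * (r + u)) * eQ + (ρ * (r + u)) ^ 2 * ne)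
      + ρ * s * ((nm + 2 * u * md + u ^ 2 * nd) + (nm + 2 * u * me + u ^ 2 * ne))
      + (ρ * (2 * r + u) - ρ ^ 2 * (r + u) ^ 2) * (nd + ne)
      + ρ * s * ((nm - 2 * mX + nX) + (nm - 2 * mY + nY))
      ≤ nP + nQ + ρ * s * (nX + nY) := by
  have h1 : ρ * (md + mP + (r + u) * (nd + dP)) ≤ 0 :=
    mul_nonpos_of_nonneg_of_nonpos hρ.le hA1
  have h2 : ρ * (me - mQ + (r + u) * (ne - eQ)) ≤ 0 :=
    mul_nonpos_of_nonneg_of_nonpos hρ.le hA2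
  have h3 : ρ * (s * (2 * nm - mX - mY) - mP + mQ) ≤ 0 :=
    mul_nonpos_of_nonneg_of_nonpos hρ.le hA3
  have key : ((nP + 2 * (ρ * (r + u)) * dP + (ρ * (r + u)) ^ 2 * nd)
      + (nQ - 2 * (ρ * (r + u)) * eQ + (ρ * (r + u)) ^ 2 * ne)
      + ρ * s * ((nm + 2 * u * md + u ^ 2 * nd) + (nm + 2 * u * me + u ^ 2 * ne))
      + (ρ * (2 * r + u) - ρ ^ 2 * (r + u) ^ 2) * (nd + ne)
      + ρ * s * ((nm - 2 * mX + nX) + (nm - 2 * mY + nY)))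
      - (nP + nQ + ρ * s * (nX + nY))
      = 2 * (ρ * (md + mP + (r + u) * (nd + dP)))
        + 2 * (ρ * (me - mQ + (r + u) * (ne - eQ)))
        + 2 * (ρ * (s * (2 * nm - mX - mY) - mP + mQ)) := by
    linear_combination (2 * ρ * (md + me) + ρ * u * (nd + ne)) * hsu
  linarith

lemma inner_bdd_tendsto {H : Type*} [NormedAddCommGroup H] [InnerProductSpace ℝ H]
    {g f : ℕ → H} {C : ℝ} (hg : ∀ᶠ n in atTop, ‖g n‖ ≤ C)
    (hf : Tendsto (fun n => ‖f n‖) atTop (nhds 0)) :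
    Tendsto (fun n => (⟪g n, f n⟫ : ℝ)) atTop (nhds 0) := by
  have hC : Tendsto (fun n => C * ‖f n‖) atTop (nhds 0) := by
    simpa using hf.const_mul C
  apply squeeze_zero_norm' _ hC
  filter_upwards [hg] with n hn
  calc ‖(⟪g n, f n⟫ : ℝ)‖ = |(⟪g n, f n⟫ : ℝ)| := Real.norm_eq_abs _
    _ ≤ ‖g n‖ * ‖f n‖ := abs_real_inner_le_norm _ _
    _ ≤ C * ‖f n‖ := mul_le_mul_of_nonneg_right hn (norm_nonneg _)

lemma tendsto_norm_of_sq {f : ℕ → ℝ} (h0 : ∀ n, 0 ≤ f n)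
    (h : Tendsto (fun n => f n ^ 2) atTop (nhds 0)) :
    Tendsto f atTop (nhds 0) := by
  have h1 : Tendsto (fun n => Real.sqrt (f n ^ 2)) atTop (nhds 0) := by
    have := (Real.continuous_sqrt.tendsto 0).comp h
    simpa [Function.comp_def] using this
  exact h1.congr (fun n => Real.sqrt_sq (h0 n))

lemma aux_sq_tendsto {E : ℕ → ℝ} {f : ℕ → ℝ} {γ : ℝ} (hγ : 0 < γ)
    (h0 : ∀ n, 0 ≤ f n)
    (hle : ∀ k : ℕ, γ * f (k+1) ^ 2 ≤ E (k+1) - E (k+2))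
    (hdiff : Tendsto (fun k => E (k+1) - E (k+2)) atTop (nhds 0)) :
    Tendsto f atTop (nhds 0) := by
  have h1 : Tendsto (fun k => γ * f (k+1) ^ 2) atTop (nhds 0) :=
    tendsto_of_tendsto_of_tendsto_of_le_of_le tendsto_const_nhds hdiff
      (fun k => by positivity) hle
  have h2 : Tendsto (fun k => f (k+1) ^ 2) atTop (nhds 0) := by
    have := h1.const_mul γ⁻¹
    simpa [← mul_assoc, inv_mul_cancel₀ hγ.ne'] using this
  have h3 : Tendsto (fun k => f (k+1)) atTop (nhds 0) :=
    tendsto_norm_of_sq (fun k => h0 _) h2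
  exact (tendsto_add_atTop_iff_nat 1).mp h3

set_option maxHeartbeats 2000000 in
/-- For Algorithm-1 iterates, the residuals
‖Bφⁿ − pⁿ‖, ‖bⁿ − qⁿ‖, ‖μⁿ − νⁿ‖, ‖μⁿ − ηⁿ‖, ‖νⁿ − νⁿ⁻¹‖, ‖ηⁿ − ηⁿ⁻¹‖,
‖pⁿ⁺¹ − pⁿ‖, ‖qⁿ⁺¹ − qⁿ‖ and I(μⁿ) − I(μ*) − ⟨μⁿ − μ*, p* − b*⟩ all tend to 0. -/
theorem algorithm1_residuals_tendsto_zero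
    {V H : Type*} [NormedAddCommGroup V] [InnerProductSpace ℝ V] [CompleteSpace V]
    [NormedAddCommGroup H] [InnerProductSpace ℝ H] [CompleteSpace H]
    (B : V →L[ℝ] H) (F : H → ℝ) (G : V → ℝ) (I : H → ℝ)
    (hFconv : ConvexOn ℝ Set.univ F) (hFlsc : LowerSemicontinuous F)
    (hGconv : ConvexOn ℝ Set.univ G) (hGlsc : LowerSemicontinuous G)
    (hIconv : ConvexOn ℝ Set.univ I) (hIlsc : LowerSemicontinuous I)
    (L : V → H → H → ℝ)
    (hL : ∀ (φ' : V) (q' μ' : H), L φ' q' μ' = F q' + G φ' - I μ' + ⟪μ', B φ' - q'⟫)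
    (r s ρ : ℝ) (hr : 0 < r) (hs : 0 < s)
    (hρ1 : 0 < ρ) (hρ2 : ρ < (2*r*s^2 + s) / (1 + r*s)^2)
    (φs : V) (qs μs : H) (ps bs : H) (hps : ps = B φs) (hbs : bs = qs)
    (hsaddle : ∀ (φ' : V) (q' μ' : H), L φs qs μ' ≤ L φs qs μs ∧ L φs qs μs ≤ L φ' q' μs)
    (φ : ℕ → V) (q μ p b ν η : ℕ → H)
    (hi : ∀ n, 1 ≤ n → ∀ μ' : H,
      I μ' - I (μ n) + ⟪μ n - μ', p n - b n⟫ - s * ⟪μ n - μ', μ n - ν (n-1)⟫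
        - s * ⟪μ n - μ', μ n - η (n-1)⟫ ≥ 0)
    (hii : ∀ n, 1 ≤ n →
      ν n = s⁻¹ • (B (φ n) - p n) + μ n ∧ η n = s⁻¹ • (b n - q n) + μ n)
    (hiii : ∀ n, 1 ≤ n → ∀ φ' : V,
      G φ' - G (φ n) + ⟪ν n + r • (B (φ n) - p n), B φ' - B (φ n)⟫ ≥ 0)
    (hiv : ∀ n, 1 ≤ n → ∀ q' : H,
      F q' - F (q n) + ⟪η n + r • (b n - q n), q n - q'⟫ ≥ 0)
    (hv : ∀ n, 1 ≤ n →
      p (n+1) = p n + (ρ * (r + 1/s)) • (B (φ n) - p n) ∧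
      b (n+1) = b n - (ρ * (r + 1/s)) • (b n - q n))
    :
    Tendsto (fun n => ‖B (φ n) - p n‖) atTop (nhds 0) ∧
    Tendsto (fun n => ‖b n - q n‖) atTop (nhds 0) ∧
    Tendsto (fun n => ‖μ n - ν n‖) atTop (nhds 0) ∧
    Tendsto (fun n => ‖μ n - η n‖) atTop (nhds 0) ∧
    Tendsto (fun n => ‖ν n - ν (n-1)‖) atTop (nhds 0) ∧
    Tendsto (fun n => ‖η n - η (n-1)‖) atTop (nhds 0) ∧
    Tendsto (fun n => ‖p (n+1) - p n‖) atTop (nhds 0) ∧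
    Tendsto (fun n => ‖q (n+1) - q n‖) atTop (nhds 0) ∧
    Tendsto (fun n => I (μ n) - I μs - ⟪μ n - μs, ps - bs⟫) atTop (nhds 0) := by
  have hsu : s * s⁻¹ = 1 := mul_inv_cancel₀ hs.ne'
  -- positivity of the damping coefficient
  have hc : 0 < ρ*(2*r+s⁻¹) - ρ^2*(r+s⁻¹)^2 := by
    have h1 : (2*r*s^2 + s) / (1 + r*s)^2 = (2*r + s⁻¹) / (r+s⁻¹)^2 := by
      rw [div_eq_div_iff (by positivity) (by positivity)]
      field_simp
      ring
    rw [h1] at hρ2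
    have h2 : ρ * (r+s⁻¹)^2 < 2*r + s⁻¹ := (lt_div_iff₀ (by positivity)).mp hρ2
    have h3 : ρ*(2*r+s⁻¹) - ρ^2*(r+s⁻¹)^2 = ρ*((2*r+s⁻¹) - ρ*(r+s⁻¹)^2) := by ring
    rw [h3]
    exact mul_pos hρ1 (sub_pos.mpr h2)
  -- saddle point consequences
  have hA : ∀ φ' : V, G φ' - G φs + ⟪μs, B φ' - B φs⟫ ≥ 0 := by
    intro φ'
    have h := (hsaddle φ' qs μs).2
    rw [hL, hL] at h
    have e1 : ⟪μs, B φ' - qs⟫ - ⟪μs, B φs - qs⟫ = ⟪μs, B φ' - B φs⟫ := by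
      rw [← inner_sub_right]; congr 1; abel
    linarith
  have hB : ∀ q' : H, F q' - F qs - ⟪μs, q' - qs⟫ ≥ 0 := by
    intro q'
    have h := (hsaddle φs q' μs).2
    rw [hL, hL] at h
    have e1 : ⟪μs, B φs - qs⟫ - ⟪μs, B φs - q'⟫ = ⟪μs, q' - qs⟫ := by
      rw [← inner_sub_right]; congr 1; abel
    linarith
  have hC : ∀ μ' : H, I μ' - I μs - ⟪μ' - μs, ps - bs⟫ ≥ 0 := by
    intro μ'
    have h := (hsaddle φs qs μ').1
    rw [hL, hL] at h
    have e1 : ⟪μ', B φs - qs⟫ - ⟪μs, B φs - qs⟫ = ⟪μ' - μs, ps - bs⟫ := by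
      rw [← inner_sub_left, hps, hbs]
    linarith
  -- the three variational scalar inequalities
  have hA1s : ∀ n, 1 ≤ n →
      ⟪μ n - μs, B (φ n) - p n⟫ + ⟪μ n - μs, p n - ps⟫
        + (r + s⁻¹) * (‖B (φ n) - p n‖^2 + ⟪B (φ n) - p n, p n - ps⟫) ≤ 0 := by
    intro n hn
    have h1 := hiii n hn φs
    have h2 := hA (φ n)
    have e1 : (ν n + r • (B (φ n) - p n) : H)
        = ((μ n - μs) + (r + s⁻¹) • (B (φ n) - p n)) + μs := by
      rw [(hii n hn).1]; module
    have e2 : B φs - B (φ n) = -((B (φ n) - p n) + (p n - ps)) := by rw [hps]; abel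
    have e3 : B (φ n) - B φs = (B (φ n) - p n) + (p n - ps) := by rw [hps]; abel
    rw [e1, e2] at h1
    rw [e3] at h2
    have e4 : ⟪((μ n - μs) + (r + s⁻¹) • (B (φ n) - p n)) + μs,
          -((B (φ n) - p n) + (p n - ps))⟫
        = -(⟪μ n - μs, B (φ n) - p n⟫ + ⟪μ n - μs, p n - ps⟫
            + (r + s⁻¹) * (‖B (φ n) - p n‖^2 + ⟪B (φ n) - p n, p n - ps⟫))
          - ⟪μs, (B (φ n) - p n) + (p n - ps)⟫ := by
      simp only [← real_inner_self_eq_norm_sq, inner_add_left, inner_add_right,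
        inner_sub_left, inner_sub_right, real_inner_smul_left, real_inner_smul_right,
        inner_neg_left, inner_neg_right, real_inner_comm]
      try ring
    rw [e4] at h1
    linarith
  have hA2s : ∀ n, 1 ≤ n →
      ⟪μ n - μs, b n - q n⟫ - ⟪μ n - μs, b n - bs⟫
        + (r + s⁻¹) * (‖b n - q n‖^2 - ⟪b n - q n, b n - bs⟫) ≤ 0 := by
    intro n hn
    have h1 := hiv n hn qs
    have h2 := hB (q n)
    have e1 : (η n + r • (b n - q n) : H)
        = ((μ n - μs) + (r + s⁻¹) • (b n - q n)) + μs := by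
      rw [(hii n hn).2]; module
    have e2 : q n - qs = (b n - bs) - (b n - q n) := by rw [hbs]; abel
    rw [e1, e2] at h1
    rw [e2] at h2
    have e4 : ⟪((μ n - μs) + (r + s⁻¹) • (b n - q n)) + μs, (b n - bs) - (b n - q n)⟫
        = -(⟪μ n - μs, b n - q n⟫ - ⟪μ n - μs, b n - bs⟫
            + (r + s⁻¹) * (‖b n - q n‖^2 - ⟪b n - q n, b n - bs⟫))
          + ⟪μs, (b n - bs) - (b n - q n)⟫ := by
      simp only [← real_inner_self_eq_norm_sq, inner_add_left, inner_add_right,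
        inner_sub_left, inner_sub_right, real_inner_smul_left, real_inner_smul_right,
        inner_neg_left, inner_neg_right, real_inner_comm]
      try ring
    rw [e4] at h1
    linarith
  have idX : ∀ n : ℕ, ⟪μ n - μs, μ n - ν (n-1)⟫
      = ‖μ n - μs‖^2 - ⟪μ n - μs, ν (n-1) - μs⟫ := by
    intro n
    rw [show μ n - ν (n-1) = (μ n - μs) - (ν (n-1) - μs) by abel]
    simp only [← real_inner_self_eq_norm_sq, inner_add_left, inner_add_right,
      inner_sub_left, inner_sub_right, real_inner_smul_left, real_inner_smul_right,
      inner_neg_left, inner_neg_right, real_inner_comm]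
    try ring
  have idY : ∀ n : ℕ, ⟪μ n - μs, μ n - η (n-1)⟫
      = ‖μ n - μs‖^2 - ⟪μ n - μs, η (n-1) - μs⟫ := by
    intro n
    rw [show μ n - η (n-1) = (μ n - μs) - (η (n-1) - μs) by abel]
    simp only [← real_inner_self_eq_norm_sq, inner_add_left, inner_add_right,
      inner_sub_left, inner_sub_right, real_inner_smul_left, real_inner_smul_right,
      inner_neg_left, inner_neg_right, real_inner_comm]
    try ring
  have idpb : ∀ n : ℕ, ⟪μ n - μs, p n - b n⟫
      = ⟪μ n - μs, p n - ps⟫ - ⟪μ n - μs, b n - bs⟫ + ⟪μ n - μs, ps - bs⟫ := by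
    intro n
    simp only [← real_inner_self_eq_norm_sq, inner_add_left, inner_add_right,
      inner_sub_left, inner_sub_right, real_inner_smul_left, real_inner_smul_right,
      inner_neg_left, inner_neg_right, real_inner_comm]
    try ring
  have hA3s : ∀ n, 1 ≤ n →
      s * (2 * ‖μ n - μs‖^2 - ⟪μ n - μs, ν (n-1) - μs⟫ - ⟪μ n - μs, η (n-1) - μs⟫)
        - ⟪μ n - μs, p n - ps⟫ + ⟪μ n - μs, b n - bs⟫ ≤ 0 := by
    intro n hn
    have h1 := hi n hn μs
    have h2 := hC (μ n)
    rw [idpb n, idX n, idY n] at h1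
    linarith
  -- the energy
  set E : ℕ → ℝ := fun n => ‖p n - ps‖^2 + ‖b n - bs‖^2
      + ρ*s*(‖ν (n-1) - μs‖^2 + ‖η (n-1) - μs‖^2) with hE
  have hEnonneg : ∀ n, 0 ≤ E n := by
    intro n
    simp only [hE]
    positivity
  have hEeq : ∀ n, E n = ‖p n - ps‖^2 + ‖b n - bs‖^2
      + ρ*s*(‖ν (n-1) - μs‖^2 + ‖η (n-1) - μs‖^2) := fun n => by simp only [hE]
  -- key one-step estimate
  have hkey : ∀ n, 1 ≤ n →
      E (n+1) + (ρ*(2*r+s⁻¹) - ρ^2*(r+s⁻¹)^2) * (‖B (φ n) - p n‖^2 + ‖b n - q n‖^2)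
        + ρ*s*(‖μ n - ν (n-1)‖^2 + ‖μ n - η (n-1)‖^2) ≤ E n := by
    intro n hn
    have hp' : p (n+1) - ps = (p n - ps) + (ρ*(r+s⁻¹)) • (B (φ n) - p n) := by
      rw [(hv n hn).1]; module
    have hb' : b (n+1) - bs = (b n - bs) - (ρ*(r+s⁻¹)) • (b n - q n) := by
      rw [(hv n hn).2]; module
    have hν' : ν n - μs = (μ n - μs) + s⁻¹ • (B (φ n) - p n) := by
      rw [(hii n hn).1]; module
    have hη' : η n - μs = (μ n - μs) + s⁻¹ • (b n - q n) := by
      rw [(hii n hn).2]; module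
    have hEn1 : E (n+1)
        = (‖p n - ps‖^2 + 2*(ρ*(r+s⁻¹))*⟪B (φ n) - p n, p n - ps⟫
            + (ρ*(r+s⁻¹))^2*‖B (φ n) - p n‖^2)
          + (‖b n - bs‖^2 - 2*(ρ*(r+s⁻¹))*⟪b n - q n, b n - bs⟫
            + (ρ*(r+s⁻¹))^2*‖b n - q n‖^2)
          + ρ*s*((‖μ n - μs‖^2 + 2*s⁻¹*⟪μ n - μs, B (φ n) - p n⟫
              + s⁻¹^2*‖B (φ n) - p n‖^2)
            + (‖μ n - μs‖^2 + 2*s⁻¹*⟪μ n - μs, b n - q n⟫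
              + s⁻¹^2*‖b n - q n‖^2)) := by
      simp only [hE, Nat.add_sub_cancel]
      rw [hp', hb', hν', hη']
      simp only [← real_inner_self_eq_norm_sq, inner_add_left, inner_add_right,
        inner_sub_left, inner_sub_right, real_inner_smul_left, real_inner_smul_right,
        inner_neg_left, inner_neg_right, real_inner_comm]
      try ring
    have n5 : ‖μ n - ν (n-1)‖^2
        = ‖μ n - μs‖^2 - 2*⟪μ n - μs, ν (n-1) - μs⟫ + ‖ν (n-1) - μs‖^2 := by
      rw [show μ n - ν (n-1) = (μ n - μs) - (ν (n-1) - μs) by abel]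
      simp only [← real_inner_self_eq_norm_sq, inner_add_left, inner_add_right,
        inner_sub_left, inner_sub_right, real_inner_smul_left, real_inner_smul_right,
        inner_neg_left, inner_neg_right, real_inner_comm]
      try ring
    have n6 : ‖μ n - η (n-1)‖^2
        = ‖μ n - μs‖^2 - 2*⟪μ n - μs, η (n-1) - μs⟫ + ‖η (n-1) - μs‖^2 := by
      rw [show μ n - η (n-1) = (μ n - μs) - (η (n-1) - μs) by abel]
      simp only [← real_inner_self_eq_norm_sq, inner_add_left, inner_add_right,
        inner_sub_left, inner_sub_right, real_inner_smul_left, real_inner_smul_right,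
        inner_neg_left, inner_neg_right, real_inner_comm]
      try ring
    rw [hEn1, hEeq n, n5, n6]
    linarith [key_scalar ρ r s s⁻¹ hρ1 hsu
      (‖B (φ n) - p n‖^2) (‖b n - q n‖^2) (‖p n - ps‖^2) (‖b n - bs‖^2)
      (‖μ n - μs‖^2) (‖ν (n-1) - μs‖^2) (‖η (n-1) - μs‖^2)
      (⟪μ n - μs, B (φ n) - p n⟫) (⟪μ n - μs, b n - q n⟫)
      (⟪μ n - μs, p n - ps⟫) (⟪μ n - μs, b n - bs⟫)
      (⟪μ n - μs, ν (n-1) - μs⟫) (⟪μ n - μs, η (n-1) - μs⟫)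
      (⟪B (φ n) - p n, p n - ps⟫) (⟪b n - q n, b n - bs⟫)
      (hA1s n hn) (hA2s n hn) (hA3s n hn)]
  -- abbreviate the damping constant
  set cc := ρ*(2*r+s⁻¹) - ρ^2*(r+s⁻¹)^2 with hccdef
  have hρs : 0 < ρ*s := mul_pos hρ1 hs
  -- monotonicity of the energy
  have hanti : ∀ k : ℕ, E (k+2) ≤ E (k+1) := by
    intro k
    have h := hkey (k+1) (Nat.le_add_left 1 k)
    have w1 : 0 ≤ cc * (‖B (φ (k+1)) - p (k+1)‖^2 + ‖b (k+1) - q (k+1)‖^2) :=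
      mul_nonneg hc.le (by positivity)
    have w2 : 0 ≤ ρ*s*(‖μ (k+1) - ν (k+1-1)‖^2 + ‖μ (k+1) - η (k+1-1)‖^2) := by positivity
    linarith
  have hmono : Antitone (fun k => E (k+1)) := antitone_nat_of_succ_le hanti
  have hbdd : BddBelow (Set.range (fun k => E (k+1))) :=
    ⟨0, by rintro x ⟨k, rfl⟩; exact hEnonneg _⟩
  have hEconv : Tendsto (fun k => E (k+1)) atTop (nhds (⨅ k, E (k+1))) :=
    tendsto_atTop_ciInf hmono hbdd
  have hEconv' : Tendsto (fun k => E (k+2)) atTop (nhds (⨅ k, E (k+1))) :=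
    hEconv.comp (tendsto_add_atTop_nat 1)
  have hdiff : Tendsto (fun k => E (k+1) - E (k+2)) atTop (nhds 0) := by
    simpa using hEconv.sub hEconv'
  have hE1b : ∀ k : ℕ, E (k+1) ≤ E 1 := by
    intro k
    simpa using hmono (Nat.zero_le k)
  -- residual limits
  have t1 : Tendsto (fun n => ‖B (φ n) - p n‖) atTop (nhds 0) := by
    apply aux_sq_tendsto hc (fun n => norm_nonneg _) _ hdiff
    intro k
    have h := hkey (k+1) (Nat.le_add_left 1 k)
    have w1 : 0 ≤ cc * ‖b (k+1) - q (k+1)‖^2 := mul_nonneg hc.le (by positivity)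
    have w2 : 0 ≤ ρ*s*(‖μ (k+1) - ν (k+1-1)‖^2 + ‖μ (k+1) - η (k+1-1)‖^2) := by positivity
    linarith
  have t2 : Tendsto (fun n => ‖b n - q n‖) atTop (nhds 0) := by
    apply aux_sq_tendsto hc (fun n => norm_nonneg _) _ hdiff
    intro k
    have h := hkey (k+1) (Nat.le_add_left 1 k)
    have w1 : 0 ≤ cc * ‖B (φ (k+1)) - p (k+1)‖^2 := mul_nonneg hc.le (by positivity)
    have w2 : 0 ≤ ρ*s*(‖μ (k+1) - ν (k+1-1)‖^2 + ‖μ (k+1) - η (k+1-1)‖^2) := by positivity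
    linarith
  have tx : Tendsto (fun n => ‖μ n - ν (n-1)‖) atTop (nhds 0) := by
    apply aux_sq_tendsto hρs (fun n => norm_nonneg _) _ hdiff
    intro k
    have h := hkey (k+1) (Nat.le_add_left 1 k)
    have w1 : 0 ≤ cc * (‖B (φ (k+1)) - p (k+1)‖^2 + ‖b (k+1) - q (k+1)‖^2) :=
      mul_nonneg hc.le (by positivity)
    have w2 : 0 ≤ ρ*s*‖μ (k+1) - η (k+1-1)‖^2 := by positivity
    linarith
  have ty : Tendsto (fun n => ‖μ n - η (n-1)‖) atTop (nhds 0) := by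
    apply aux_sq_tendsto hρs (fun n => norm_nonneg _) _ hdiff
    intro k
    have h := hkey (k+1) (Nat.le_add_left 1 k)
    have w1 : 0 ≤ cc * (‖B (φ (k+1)) - p (k+1)‖^2 + ‖b (k+1) - q (k+1)‖^2) :=
      mul_nonneg hc.le (by positivity)
    have w2 : 0 ≤ ρ*s*‖μ (k+1) - ν (k+1-1)‖^2 := by positivity
    linarith
  -- uniform bounds
  have hbX : ∀ n : ℕ, ‖ν n - μs‖ ≤ Real.sqrt (E 1 / (ρ*s)) := by
    intro n
    have h1 : ρ*s*‖ν n - μs‖^2 ≤ E (n+1) := by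
      rw [hEeq (n+1)]
      simp only [Nat.add_sub_cancel]
      have w1 : (0:ℝ) ≤ ‖p (n+1) - ps‖^2 := by positivity
      have w2 : (0:ℝ) ≤ ‖b (n+1) - bs‖^2 := by positivity
      have w3 : (0:ℝ) ≤ ρ*s*‖η n - μs‖^2 := by positivity
      linarith
    have h2 : ‖ν n - μs‖^2 ≤ E 1 / (ρ*s) := by
      rw [le_div_iff₀ hρs]
      have := hE1b n
      linarith
    calc ‖ν n - μs‖ = Real.sqrt (‖ν n - μs‖^2) := (Real.sqrt_sq (norm_nonneg _)).symm
      _ ≤ _ := Real.sqrt_le_sqrt h2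
  have hbd : ∀ n, 1 ≤ n → ‖B (φ n) - p n‖ ≤ Real.sqrt (E 1 / cc) := by
    intro n hn
    obtain ⟨k, rfl⟩ : ∃ k, n = k+1 := ⟨n-1, (Nat.succ_pred_eq_of_pos hn).symm⟩
    have h := hkey (k+1) (Nat.le_add_left 1 k)
    have h1 : cc * ‖B (φ (k+1)) - p (k+1)‖^2 ≤ E 1 := by
      have w1 : 0 ≤ cc * ‖b (k+1) - q (k+1)‖^2 := mul_nonneg hc.le (by positivity)
      have w2 : 0 ≤ ρ*s*(‖μ (k+1) - ν (k+1-1)‖^2 + ‖μ (k+1) - η (k+1-1)‖^2) := by positivity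
      have w3 := hEnonneg (k+1+1)
      have w4 := hE1b k
      linarith
    have h2 : ‖B (φ (k+1)) - p (k+1)‖^2 ≤ E 1 / cc := by
      rw [le_div_iff₀ hc]; linarith
    calc ‖B (φ (k+1)) - p (k+1)‖ = Real.sqrt (‖B (φ (k+1)) - p (k+1)‖^2) :=
        (Real.sqrt_sq (norm_nonneg _)).symm
      _ ≤ _ := Real.sqrt_le_sqrt h2
  have hbm : ∀ n, 1 ≤ n →
      ‖μ n - μs‖ ≤ Real.sqrt (E 1/(ρ*s)) + s⁻¹ * Real.sqrt (E 1/cc) := by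
    intro n hn
    have e : μ n - μs = (ν n - μs) - s⁻¹ • (B (φ n) - p n) := by
      rw [(hii n hn).1]; module
    rw [e]
    calc ‖(ν n - μs) - s⁻¹ • (B (φ n) - p n)‖
        ≤ ‖ν n - μs‖ + ‖s⁻¹ • (B (φ n) - p n)‖ := norm_sub_le _ _
      _ = ‖ν n - μs‖ + s⁻¹ * ‖B (φ n) - p n‖ := by
          rw [norm_smul, Real.norm_eq_abs, abs_of_nonneg (inv_nonneg.mpr hs.le)]
      _ ≤ _ := add_le_add (hbX n)
          (mul_le_mul_of_nonneg_left (hbd n hn) (inv_nonneg.mpr hs.le))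
  have hbP : ∀ n, 1 ≤ n → ‖p n - ps‖ ≤ Real.sqrt (E 1) := by
    intro n hn
    obtain ⟨k, rfl⟩ : ∃ k, n = k+1 := ⟨n-1, (Nat.succ_pred_eq_of_pos hn).symm⟩
    have h1 : ‖p (k+1) - ps‖^2 ≤ E 1 := by
      have he := hEeq (k+1)
      have w2 : (0:ℝ) ≤ ‖b (k+1) - bs‖^2 := by positivity
      have w3 : (0:ℝ) ≤ ρ*s*(‖ν (k+1-1) - μs‖^2 + ‖η (k+1-1) - μs‖^2) := by positivity
      have w4 := hE1b k
      linarith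
    calc ‖p (k+1) - ps‖ = Real.sqrt (‖p (k+1) - ps‖^2) := (Real.sqrt_sq (norm_nonneg _)).symm
      _ ≤ _ := Real.sqrt_le_sqrt h1
  have hbQ : ∀ n, 1 ≤ n → ‖b n - bs‖ ≤ Real.sqrt (E 1) := by
    intro n hn
    obtain ⟨k, rfl⟩ : ∃ k, n = k+1 := ⟨n-1, (Nat.succ_pred_eq_of_pos hn).symm⟩
    have h1 : ‖b (k+1) - bs‖^2 ≤ E 1 := by
      have he := hEeq (k+1)
      have w2 : (0:ℝ) ≤ ‖p (k+1) - ps‖^2 := by positivity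
      have w3 : (0:ℝ) ≤ ρ*s*(‖ν (k+1-1) - μs‖^2 + ‖η (k+1-1) - μs‖^2) := by positivity
      have w4 := hE1b k
      linarith
    calc ‖b (k+1) - bs‖ = Real.sqrt (‖b (k+1) - bs‖^2) := (Real.sqrt_sq (norm_nonneg _)).symm
      _ ≤ _ := Real.sqrt_le_sqrt h1
  -- eventual bounds
  have evm : ∀ᶠ n in atTop, ‖μ n - μs‖ ≤ Real.sqrt (E 1/(ρ*s)) + s⁻¹ * Real.sqrt (E 1/cc) := by
    filter_upwards [eventually_ge_atTop 1] with n hn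
    exact hbm n hn
  have evP : ∀ᶠ n in atTop, ‖p n - ps‖ ≤ Real.sqrt (E 1) := by
    filter_upwards [eventually_ge_atTop 1] with n hn
    exact hbP n hn
  have evQ : ∀ᶠ n in atTop, ‖b n - bs‖ ≤ Real.sqrt (E 1) := by
    filter_upwards [eventually_ge_atTop 1] with n hn
    exact hbQ n hn
  -- scalar limits
  have tmd : Tendsto (fun n => (⟪μ n - μs, B (φ n) - p n⟫:ℝ)) atTop (nhds 0) :=
    inner_bdd_tendsto evm t1
  have tme : Tendsto (fun n => (⟪μ n - μs, b n - q n⟫:ℝ)) atTop (nhds 0) :=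
    inner_bdd_tendsto evm t2
  have tdP : Tendsto (fun n => (⟪B (φ n) - p n, p n - ps⟫:ℝ)) atTop (nhds 0) :=
    (inner_bdd_tendsto evP t1).congr (fun n => real_inner_comm _ _)
  have teQ : Tendsto (fun n => (⟪b n - q n, b n - bs⟫:ℝ)) atTop (nhds 0) :=
    (inner_bdd_tendsto evQ t2).congr (fun n => real_inner_comm _ _)
  have tnd : Tendsto (fun n => ‖B (φ n) - p n‖^2) atTop (nhds 0) := by
    simpa [pow_two] using t1.mul t1
  have tne : Tendsto (fun n => ‖b n - q n‖^2) atTop (nhds 0) := by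
    simpa [pow_two] using t2.mul t2
  have tmX : Tendsto (fun n => (⟪μ n - μs, μ n - ν (n-1)⟫:ℝ)) atTop (nhds 0) :=
    inner_bdd_tendsto evm tx
  have tmY : Tendsto (fun n => (⟪μ n - μs, μ n - η (n-1)⟫:ℝ)) atTop (nhds 0) :=
    inner_bdd_tendsto evm ty
  have tLo : Tendsto (fun n => s*(⟪μ n - μs, μ n - ν (n-1)⟫:ℝ)
      + s*(⟪μ n - μs, μ n - η (n-1)⟫:ℝ)) atTop (nhds 0) := by
    simpa using (tmX.const_mul s).add (tmY.const_mul s)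
  have tUp : Tendsto (fun n => -(((⟪μ n - μs, B (φ n) - p n⟫:ℝ) + (⟪μ n - μs, b n - q n⟫:ℝ))
      + ((r+s⁻¹)*(‖B (φ n) - p n‖^2 + (⟪B (φ n) - p n, p n - ps⟫:ℝ))
        + (r+s⁻¹)*(‖b n - q n‖^2 - (⟪b n - q n, b n - bs⟫:ℝ))))) atTop (nhds 0) := by
    simpa using ((tmd.add tme).add
      (((tnd.add tdP).const_mul (r+s⁻¹)).add ((tne.sub teQ).const_mul (r+s⁻¹)))).neg
  have tW : Tendsto (fun n => (⟪μ n - μs, p n - ps⟫:ℝ) - (⟪μ n - μs, b n - bs⟫:ℝ))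
      atTop (nhds 0) := by
    apply tendsto_of_tendsto_of_tendsto_of_le_of_le' tLo tUp
    · filter_upwards [eventually_ge_atTop 1] with n hn
      have idXs : s*(⟪μ n - μs, μ n - ν (n-1)⟫:ℝ)
          = s*‖μ n - μs‖^2 - s*(⟪μ n - μs, ν (n-1) - μs⟫:ℝ) := by rw [idX n]; ring
      have idYs : s*(⟪μ n - μs, μ n - η (n-1)⟫:ℝ)
          = s*‖μ n - μs‖^2 - s*(⟪μ n - μs, η (n-1) - μs⟫:ℝ) := by rw [idY n]; ring
      linarith [hA3s n hn, idXs, idYs]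
    · filter_upwards [eventually_ge_atTop 1] with n hn
      linarith [hA1s n hn, hA2s n hn]
  -- goal 3
  have g3 : Tendsto (fun n => ‖μ n - ν n‖) atTop (nhds 0) := by
    have hev : (fun n => s⁻¹ * ‖B (φ n) - p n‖) =ᶠ[atTop] (fun n => ‖μ n - ν n‖) := by
      filter_upwards [eventually_ge_atTop 1] with n hn
      have e : μ n - ν n = -(s⁻¹ • (B (φ n) - p n)) := by rw [(hii n hn).1]; module
      rw [e, norm_neg, norm_smul, Real.norm_eq_abs, abs_of_nonneg (inv_nonneg.mpr hs.le)]
    exact Tendsto.congr' hev (by simpa using t1.const_mul s⁻¹)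
  have g4 : Tendsto (fun n => ‖μ n - η n‖) atTop (nhds 0) := by
    have hev : (fun n => s⁻¹ * ‖b n - q n‖) =ᶠ[atTop] (fun n => ‖μ n - η n‖) := by
      filter_upwards [eventually_ge_atTop 1] with n hn
      have e : μ n - η n = -(s⁻¹ • (b n - q n)) := by rw [(hii n hn).2]; module
      rw [e, norm_neg, norm_smul, Real.norm_eq_abs, abs_of_nonneg (inv_nonneg.mpr hs.le)]
    exact Tendsto.congr' hev (by simpa using t2.const_mul s⁻¹)
  -- goal 5
  have g5 : Tendsto (fun n => ‖ν n - ν (n-1)‖) atTop (nhds 0) := by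
    apply squeeze_zero_norm' _
      (show Tendsto (fun n => s⁻¹*‖B (φ n) - p n‖ + ‖μ n - ν (n-1)‖) atTop (nhds 0) by
        simpa using (t1.const_mul s⁻¹).add tx)
    filter_upwards [eventually_ge_atTop 1] with n hn
    have e : ν n - ν (n-1) = (s⁻¹ • (B (φ n) - p n)) + (μ n - ν (n-1)) := by
      rw [(hii n hn).1]; module
    rw [norm_norm, e]
    calc ‖s⁻¹ • (B (φ n) - p n) + (μ n - ν (n-1))‖
        ≤ ‖s⁻¹ • (B (φ n) - p n)‖ + ‖μ n - ν (n-1)‖ := norm_add_le _ _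
      _ = s⁻¹*‖B (φ n) - p n‖ + ‖μ n - ν (n-1)‖ := by
          rw [norm_smul, Real.norm_eq_abs, abs_of_nonneg (inv_nonneg.mpr hs.le)]
  have g6 : Tendsto (fun n => ‖η n - η (n-1)‖) atTop (nhds 0) := by
    apply squeeze_zero_norm' _
      (show Tendsto (fun n => s⁻¹*‖b n - q n‖ + ‖μ n - η (n-1)‖) atTop (nhds 0) by
        simpa using (t2.const_mul s⁻¹).add ty)
    filter_upwards [eventually_ge_atTop 1] with n hn
    have e : η n - η (n-1) = (s⁻¹ • (b n - q n)) + (μ n - η (n-1)) := by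
      rw [(hii n hn).2]; module
    rw [norm_norm, e]
    calc ‖s⁻¹ • (b n - q n) + (μ n - η (n-1))‖
        ≤ ‖s⁻¹ • (b n - q n)‖ + ‖μ n - η (n-1)‖ := norm_add_le _ _
      _ = s⁻¹*‖b n - q n‖ + ‖μ n - η (n-1)‖ := by
          rw [norm_smul, Real.norm_eq_abs, abs_of_nonneg (inv_nonneg.mpr hs.le)]
  -- goal 7
  have g7 : Tendsto (fun n => ‖p (n+1) - p n‖) atTop (nhds 0) := by
    have hev : (fun n => (ρ*(r+1/s)) * ‖B (φ n) - p n‖) =ᶠ[atTop]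
        (fun n => ‖p (n+1) - p n‖) := by
      filter_upwards [eventually_ge_atTop 1] with n hn
      have e : p (n+1) - p n = (ρ*(r+1/s)) • (B (φ n) - p n) := by
        rw [(hv n hn).1]; abel
      rw [e, norm_smul, Real.norm_eq_abs, abs_of_nonneg (by positivity)]
    exact Tendsto.congr' hev (by simpa using t1.const_mul (ρ*(r+1/s)))
  -- goal 8
  have g8 : Tendsto (fun n => ‖q (n+1) - q n‖) atTop (nhds 0) := by
    apply squeeze_zero_norm' _
      (show Tendsto (fun n => |1 - ρ*(r+1/s)| * ‖b n - q n‖ + ‖b (n+1) - q (n+1)‖)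
          atTop (nhds 0) by
        simpa using (t2.const_mul (|1 - ρ*(r+1/s)|)).add (t2.comp (tendsto_add_atTop_nat 1)))
    filter_upwards [eventually_ge_atTop 1] with n hn
    have e : q (n+1) - q n = (1 - ρ*(r+1/s)) • (b n - q n) - (b (n+1) - q (n+1)) := by
      rw [(hv n hn).2]; module
    rw [norm_norm, e]
    calc ‖(1 - ρ*(r+1/s)) • (b n - q n) - (b (n+1) - q (n+1))‖
        ≤ ‖(1 - ρ*(r+1/s)) • (b n - q n)‖ + ‖b (n+1) - q (n+1)‖ := norm_sub_le _ _
      _ = |1 - ρ*(r+1/s)| * ‖b n - q n‖ + ‖b (n+1) - q (n+1)‖ := by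
          rw [norm_smul, Real.norm_eq_abs]
  -- goal 9
  have t9 : Tendsto (fun n => I (μ n) - I μs - ⟪μ n - μs, ps - bs⟫) atTop (nhds 0) := by
    apply tendsto_of_tendsto_of_tendsto_of_le_of_le' tendsto_const_nhds
      (show Tendsto (fun n => ((⟪μ n - μs, p n - ps⟫:ℝ) - (⟪μ n - μs, b n - bs⟫:ℝ))
          - (s*(⟪μ n - μs, μ n - ν (n-1)⟫:ℝ) + s*(⟪μ n - μs, μ n - η (n-1)⟫:ℝ)))
          atTop (nhds 0) by simpa using tW.sub tLo)
    · exact Eventually.of_forall (fun n => hC (μ n))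
    · filter_upwards [eventually_ge_atTop 1] with n hn
      have h1 := hi n hn μs
      have h2 := idpb n
      linarith
  exact ⟨t1, t2, g3, g4, g5, g6, g7, g8, t9⟩
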